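/- Let P ⊆ ℝ^d be a full-dimensional lattice polytope and suppose a_0, ..., a_ℓ ∈ (ℤ^d)* are Fine core normals of P (with ℓ ≥ 1) for which there exist real numbers λ_0, ..., λ_ℓ > 0 with λ_0 a_0 + ... + λ_ℓ a_ℓ = 0. Then there exist an integer ℓ' with 1 ≤ ℓ' ≤ ℓ and a full-dimensional lattice polytope Q ⊆ ℝ^{ℓ'} such that μ^F(P) = μ^F(Q). -/

import Mathlib

open Set

noncomputable section

/-- The pairing `⟨a, x⟩ = ∑ i, a i * x i` of an integer linear functional with a point. -/
def pair {d : ℕ} (a : Fin d → ℤ) (x : Fin d → ℝ) : ℝ := ∑ i, (a i : ℝ) * x i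

/-- The support function `h_P(a) = min_{x ∈ P} ⟨a, x⟩`. -/
def suppFn {d : ℕ} (P : Set (Fin d → ℝ)) (a : Fin d → ℤ) : ℝ := sInf (pair a '' P)

/-- The Fine adjoint polytope `P^{F(s)}`. -/
def fineAdjoint {d : ℕ} (P : Set (Fin d → ℝ)) (s : ℝ) : Set (Fin d → ℝ) :=
  {x | ∀ a : Fin d → ℤ, a ≠ 0 → suppFn P a + s ≤ pair a x}

/-- The Fine number `n^F(P) = sup {s > 0 : P^{F(s)} ≠ ∅}`. -/
def fineNumber {d : ℕ} (P : Set (Fin d → ℝ)) : ℝ :=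
  sSup {s : ℝ | 0 < s ∧ (fineAdjoint P s).Nonempty}

/-- The Fine ℚ-codegree `μ^F(P) = (n^F(P))⁻¹`. -/
def fineCodeg {d : ℕ} (P : Set (Fin d → ℝ)) : ℝ := (fineNumber P)⁻¹

/-- The Fine core `core^F(P) = P^{F(n^F(P))}`. -/
def fineCore {d : ℕ} (P : Set (Fin d → ℝ)) : Set (Fin d → ℝ) := fineAdjoint P (fineNumber P)

/-- A rational polytope: the convex hull of finitely many rational points. -/
def IsRationalPolytope {d : ℕ} (P : Set (Fin d → ℝ)) : Prop :=
  ∃ V : Finset (Fin d → ℝ), V.Nonempty ∧ (∀ v ∈ V, ∀ i, ∃ q : ℚ, v i = (q : ℝ)) ∧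
    P = convexHull ℝ (V : Set (Fin d → ℝ))

/-- A lattice polytope: the convex hull of finitely many integer points. -/
def IsLatticePolytope {d : ℕ} (P : Set (Fin d → ℝ)) : Prop :=
  ∃ V : Finset (Fin d → ℝ), V.Nonempty ∧ (∀ v ∈ V, ∀ i, ∃ n : ℤ, v i = (n : ℝ)) ∧
    P = convexHull ℝ (V : Set (Fin d → ℝ))

/-- Full-dimensional: the affine hull is all of `ℝ^d`. -/
def IsFullDim {d : ℕ} (P : Set (Fin d → ℝ)) : Prop := affineSpan ℝ P = ⊤

/-- A nonzero integer functional `a` is a Fine core normal of `P` if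
`⟨a, y⟩ = h_P(a) + n^F(P)` for every `y` in the Fine core of `P`. -/
def IsFineCoreNormal {d : ℕ} (P : Set (Fin d → ℝ)) (a : Fin d → ℤ) : Prop :=
  a ≠ 0 ∧ ∀ y ∈ fineCore P, pair a y = suppFn P a + fineNumber P

/-- The set of integer points of `ℝ^k`. -/
def intPts (k : ℕ) : Set (Fin k → ℝ) := {x | ∀ i, ∃ n : ℤ, x i = (n : ℝ)}

/-- The Fine spectrum in dimension `k`. -/
def fineSpec (k : ℕ) : Set ℝ :=
  {r | ∃ P : Set (Fin k → ℝ), IsLatticePolytope P ∧ IsFullDim P ∧ r = fineCodeg P}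

/-- Unimodular equivalence of subsets of `ℝ^k`. -/
def UnimodEquiv {k : ℕ} (P Q : Set (Fin k → ℝ)) : Prop :=
  ∃ U : Matrix (Fin k) (Fin k) ℤ, IsUnit U.det ∧ ∃ v : Fin k → ℤ,
    P = (fun x => fun i => (∑ j, (U i j : ℝ) * x j) + (v i : ℝ)) '' Q

/-- The standard simplex `Δ_k = conv{0, e_1, ..., e_k}`. -/
def stdSimp (k : ℕ) : Set (Fin k → ℝ) :=
  convexHull ℝ (insert (0 : Fin k → ℝ) (Set.range fun i => Pi.single i (1 : ℝ)))

/-- The lattice pyramid `Pyr(Q) = conv((Q × {1}) ∪ {0})`. -/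
def pyrSet {k : ℕ} (Q : Set (Fin k → ℝ)) : Set (Fin (k + 1) → ℝ) :=
  convexHull ℝ (((fun x => Fin.snoc x (1 : ℝ)) '' Q) ∪ {0})

/-- Twice the standard triangle, `2Δ₂ = conv{(0,0),(2,0),(0,2)}`. -/
def twoDelta2 : Set (Fin 2 → ℝ) :=
  convexHull ℝ ({![0, 0], ![2, 0], ![0, 2]} : Set (Fin 2 → ℝ))

/-- The `m`-fold iterated lattice pyramid over `2Δ₂`. -/
def iterPyr : (m : ℕ) → Set (Fin (2 + m) → ℝ)
  | 0 => twoDelta2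
  | m + 1 => pyrSet (iterPyr m)

end

section Aux

variable {d : ℕ}

lemma pair_continuous (a : Fin d → ℤ) : Continuous (pair a) := by
  unfold pair
  exact continuous_finset_sum _ fun i _ => (continuous_const.mul (continuous_apply i))

lemma suppFn_le {P : Set (Fin d → ℝ)} (hc : IsCompact P) {x : Fin d → ℝ} (hx : x ∈ P)
    (a : Fin d → ℤ) : suppFn P a ≤ pair a x :=
  csInf_le (hc.image (pair_continuous a)).bddBelow ⟨x, hx, rfl⟩

lemma fineAdjoint_anti {P : Set (Fin d → ℝ)} {s t : ℝ} (h : s ≤ t) :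
    fineAdjoint P t ⊆ fineAdjoint P s := by
  intro x hx a hane
  have := hx a hane
  linarith

lemma isClosed_fineAdjoint (P : Set (Fin d → ℝ)) (s : ℝ) : IsClosed (fineAdjoint P s) := by
  have : fineAdjoint P s = ⋂ (a : Fin d → ℤ) (_ : a ≠ 0), {x | suppFn P a + s ≤ pair a x} := by
    ext x; simp [fineAdjoint, Set.mem_iInter]
  rw [this]
  exact isClosed_iInter fun a => isClosed_iInter fun _ =>
    isClosed_le continuous_const (pair_continuous a)

lemma pair_single (k : Fin d) (x : Fin d → ℝ) : pair (Pi.single k 1) x = x k := by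
  unfold pair
  rw [Finset.sum_eq_single k]
  · simp
  · intro i _ hik
    simp [Pi.single_apply, hik]
  · simp

lemma pair_neg (a : Fin d → ℤ) (x : Fin d → ℝ) : pair (-a) x = -pair a x := by
  unfold pair
  rw [← Finset.sum_neg_distrib]
  exact Finset.sum_congr rfl fun i _ => by simp [Pi.neg_apply]

lemma exists_int_sum {n : ℕ} (f : Fin n → ℝ) (h : ∀ k, ∃ m : ℤ, f k = m) :
    ∃ m : ℤ, ∑ k, f k = (m : ℝ) := by
  choose m hm using h
  exact ⟨∑ k, m k, by rw [Int.cast_sum]; exact Finset.sum_congr rfl fun k _ => hm k⟩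

/-- The fine core is nonempty provided the relevant set of `s` is nonempty and bounded above. -/
lemma fineCore_nonempty {P : Set (Fin d → ℝ)}
    (hS : {s : ℝ | 0 < s ∧ (fineAdjoint P s).Nonempty}.Nonempty)
    (hB : BddAbove {s : ℝ | 0 < s ∧ (fineAdjoint P s).Nonempty}) :
    (fineCore P).Nonempty := by
  classical
  set S := {s : ℝ | 0 < s ∧ (fineAdjoint P s).Nonempty} with hSdef
  have hne : Nonempty ↥S := hS.to_subtype
  set lo : Fin d → ℝ := fun k => suppFn P (Pi.single k 1) with hlo
  set hi : Fin d → ℝ := fun k => -suppFn P (-(Pi.single k 1)) with hhi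
  have hbox : ∀ s ∈ S, fineAdjoint P s ⊆ Set.Icc lo hi := by
    rintro s ⟨hs, -⟩ x hx
    constructor
    · intro k
      have h1 := hx (Pi.single k 1) (by
        intro h; have := congrFun h k; simp [Pi.single_eq_same] at this)
      rw [pair_single] at h1
      simp only [hlo]
      linarith
    · intro k
      have h2 := hx (-(Pi.single k 1)) (by
        intro h; have := congrFun h k; simp [Pi.single_eq_same] at this)
      rw [pair_neg, pair_single] at h2
      simp only [hhi]
      linarith
  have hcpt : ∀ s : ↥S, IsCompact (fineAdjoint P (s : ℝ)) := fun s =>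
    IsCompact.of_isClosed_subset isCompact_Icc (isClosed_fineAdjoint P s) (hbox s s.2)
  have hdir : Directed (· ⊇ ·) (fun s : ↥S => fineAdjoint P (s : ℝ)) := by
    intro s t
    rcases le_total (s : ℝ) t with h | h
    · exact ⟨t, fineAdjoint_anti h, subset_rfl⟩
    · exact ⟨s, subset_rfl, fineAdjoint_anti h⟩
  have hnonempty : ∀ s : ↥S, (fineAdjoint P (s : ℝ)).Nonempty := fun s => s.2.2
  obtain ⟨x, hx⟩ := IsCompact.nonempty_iInter_of_directed_nonempty_isCompact_isClosed
    (fun s : ↥S => fineAdjoint P (s : ℝ)) hdir hnonempty hcpt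
    (fun s => isClosed_fineAdjoint P (s : ℝ))
  refine ⟨x, ?_⟩
  intro a hane
  have h : ∀ s ∈ S, s ≤ pair a x - suppFn P a := by
    intro s hs
    have := (Set.mem_iInter.mp hx ⟨s, hs⟩) a hane
    linarith
  have := csSup_le hS h
  unfold fineNumber
  linarith

end Aux
section Aux2

/-- Coordinatewise cast `ℤ^d → ℚ^d` as a `ℤ`-linear map. -/
def castQ (d : ℕ) : (Fin d → ℤ) →ₗ[ℤ] (Fin d → ℚ) where
  toFun v := fun k => (v k : ℚ)
  map_add' u v := by funext k; simp
  map_smul' m v := by funext k; simp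

lemma castQ_injective (d : ℕ) : Function.Injective (castQ d) := by
  intro u v h
  funext k
  have h2 : (u k : ℚ) = (v k : ℚ) := congrFun h k
  exact_mod_cast h2

/-- The Gram matrix of a `ℚ`-linearly independent family of integer vectors has
nonzero determinant. -/
lemma gram_det_ne_zero {n d : ℕ} (b : Fin n → Fin d → ℤ)
    (hind : LinearIndependent ℚ (fun j => castQ d (b j))) :
    (Matrix.of fun i j => ∑ k, b i k * b j k : Matrix (Fin n) (Fin n) ℤ).det ≠ 0 := by
  classical
  intro hdet
  set G : Matrix (Fin n) (Fin n) ℤ := Matrix.of fun i j => ∑ k, b i k * b j k with hG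
  have hdetQ : (G.map (Int.cast : ℤ → ℚ)).det = 0 := by
    have h := (Int.castRingHom ℚ).map_det G
    rw [hdet] at h
    simpa using h.symm
  obtain ⟨c, hc0, hcv⟩ := (Matrix.exists_mulVec_eq_zero_iff).mpr hdetQ
  set g : Fin d → ℚ := fun k => ∑ i, c i * (b i k : ℚ) with hg
  have hsq : ∑ k, g k * g k = 0 := by
    have h1 : ∑ i, c i * ((G.map (Int.cast : ℤ → ℚ)).mulVec c) i = 0 := by
      rw [hcv]; simp
    calc ∑ k, g k * g k
        = ∑ k, ∑ i, ∑ j, (c i * (b i k : ℚ)) * (c j * (b j k : ℚ)) := by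
          refine Finset.sum_congr rfl fun k _ => ?_
          rw [hg, Finset.sum_mul_sum]
      _ = ∑ i, ∑ k, ∑ j, (c i * (b i k : ℚ)) * (c j * (b j k : ℚ)) := Finset.sum_comm
      _ = ∑ i, c i * ((G.map (Int.cast : ℤ → ℚ)).mulVec c) i := by
          refine Finset.sum_congr rfl fun i _ => ?_
          rw [Matrix.mulVec, dotProduct, Finset.mul_sum, Finset.sum_comm]
          refine Finset.sum_congr rfl fun j _ => ?_
          simp only [Matrix.map_apply, hG, Matrix.of_apply]
          push_cast
          rw [Finset.sum_mul, Finset.mul_sum]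
          refine Finset.sum_congr rfl fun k _ => ?_
          ring
      _ = 0 := h1
  have hgz : ∀ k, g k = 0 := by
    intro k
    have := (Finset.sum_eq_zero_iff_of_nonneg (fun k _ => mul_self_nonneg (g k))).mp hsq k
      (Finset.mem_univ k)
    exact (mul_self_eq_zero).mp this
  apply hc0
  have h3 : ∑ i, c i • castQ d (b i) = 0 := by
    funext k
    have h4 : (∑ i, c i • castQ d (b i)) k = ∑ i, c i * (b i k : ℚ) := by
      rw [Finset.sum_apply]
      rfl
    rw [h4]
    simpa using hgz k
  have := Fintype.linearIndependent_iff.mp hind c h3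
  funext i; exact this i

end Aux2
/-- a positive linear relation among Fine core normals allows reducing
the dimension while preserving the Fine ℚ-codegree. -/
theorem stmt_6 {d : ℕ} (P : Set (Fin d → ℝ)) (hP : IsLatticePolytope P) (hfull : IsFullDim P)
    (ℓ : ℕ) (hℓ : 1 ≤ ℓ) (a : Fin (ℓ + 1) → Fin d → ℤ)
    (ha : ∀ i, IsFineCoreNormal P (a i))
    (lam : Fin (ℓ + 1) → ℝ) (hlam : ∀ i, 0 < lam i)
    (hrel : ∀ j, ∑ i, lam i * (a i j : ℝ) = 0) :
    ∃ ℓ' : ℕ, 1 ≤ ℓ' ∧ ℓ' ≤ ℓ ∧ ∃ Q : Set (Fin ℓ' → ℝ),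
      IsLatticePolytope Q ∧ IsFullDim Q ∧ fineCodeg P = fineCodeg Q := by
  classical
  obtain ⟨V, hVne, hVint, hPeq⟩ := hP
  have hPcpt : IsCompact P := hPeq ▸ V.finite_toSet.isCompact_convexHull ℝ
  have hPconv : Convex ℝ P := hPeq ▸ convex_convexHull ℝ _
  obtain ⟨k0, hk0⟩ : ∃ k, a 0 k ≠ 0 := by
    by_contra h; push_neg at h; exact (ha 0).1 (funext h)
  -- the scaling set for `P`
  set S : Set ℝ := {s : ℝ | 0 < s ∧ (fineAdjoint P s).Nonempty} with hSdef
  have hSne : S.Nonempty := by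
    obtain ⟨x0, hx0⟩ := (hPconv.interior_nonempty_iff_affineSpan_eq_top).mpr hfull
    obtain ⟨ε, hε, hball⟩ := Metric.isOpen_iff.mp isOpen_interior x0 hx0
    refine ⟨ε / 2, by linarith, x0, ?_⟩
    intro c hcne
    obtain ⟨i0, hi0⟩ : ∃ i, c i ≠ 0 := by
      by_contra h; push_neg at h; exact hcne (funext h)
    set sgn : ℝ := if 0 < c i0 then 1 else -1 with hsgn
    set u : Fin d → ℝ := fun k => x0 k - (if k = i0 then ε / 2 * sgn else 0) with hu
    have hsgnabs : |sgn| = 1 := by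
      rw [hsgn]; split <;> simp
    have hu_mem : u ∈ P := by
      refine interior_subset (hball ?_)
      rw [Metric.mem_ball, dist_eq_norm]
      rw [pi_norm_lt_iff hε]
      intro k
      simp only [hu, Pi.sub_apply]
      have : x0 k - (if k = i0 then ε / 2 * sgn else 0) - x0 k
          = -(if k = i0 then ε / 2 * sgn else 0) := by ring
      rw [this, norm_neg]
      split
      · rw [Real.norm_eq_abs, abs_mul, hsgnabs]
        rw [abs_of_pos (by linarith)]
        linarith
      · simpa using hε
    have hpair : pair c u = pair c x0 - (c i0 : ℝ) * (ε / 2 * sgn) := by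
      unfold pair
      have : ∀ k : Fin d, (c k : ℝ) * u k
          = (c k : ℝ) * x0 k - (c k : ℝ) * (if k = i0 then ε / 2 * sgn else 0) := by
        intro k; rw [hu]; ring
      rw [Finset.sum_congr rfl fun k _ => this k, Finset.sum_sub_distrib]
      congr 1
      rw [Finset.sum_eq_single i0]
      · simp
      · intro k _ hk; simp [hk]
      · simp
    have hsgn_ge : 1 ≤ (c i0 : ℝ) * sgn := by
      rw [hsgn]
      split
      · rename_i h
        have : (1 : ℝ) ≤ (c i0 : ℝ) := by exact_mod_cast h
        linarith
      · rename_i h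
        have h2 : c i0 < 0 := lt_of_le_of_ne (by omega) hi0
        have : (1 : ℝ) ≤ -(c i0 : ℝ) := by exact_mod_cast (by omega : (1 : ℤ) ≤ -(c i0))
        linarith
    have hle := suppFn_le hPcpt hu_mem c
    have : (c i0 : ℝ) * (ε / 2 * sgn) = ε / 2 * ((c i0 : ℝ) * sgn) := by ring
    rw [hpair, this] at hle
    nlinarith
  have hSbdd : BddAbove S := by
    refine ⟨(-suppFn P (Pi.single k0 1) - suppFn P (-(Pi.single k0 1))) / 2, ?_⟩
    rintro s ⟨hs, x, hx⟩
    have hne1 : (Pi.single k0 1 : Fin d → ℤ) ≠ 0 := by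
      intro h; have := congrFun h k0; simp [Pi.single_eq_same] at this
    have h1 := hx _ hne1
    have h2 := hx _ (neg_ne_zero.mpr hne1)
    rw [pair_single] at h1
    rw [pair_neg, pair_single] at h2
    linarith
  obtain ⟨y, hy⟩ := fineCore_nonempty hSne hSbdd
  have hyeq : ∀ i, pair (a i) y = suppFn P (a i) + fineNumber P := fun i => (ha i).2 y hy
  -- the lattice generated by the normals, with a basis
  set L : Submodule ℤ (Fin d → ℤ) := Submodule.span ℤ (Set.range a) with hL
  have haL : ∀ i, a i ∈ L := fun i => Submodule.subset_span ⟨i, rfl⟩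
  obtain ⟨n, bL⟩ := Submodule.basisOfPid (Pi.basisFun ℤ (Fin d)) L
  set b : Fin n → Fin d → ℤ := fun j => (bL j : Fin d → ℤ) with hb
  have hbZ : LinearIndependent ℤ b := bL.linearIndependent.map' L.subtype (Submodule.ker_subtype L)
  have hbQ : LinearIndependent ℚ (fun j => castQ d (b j)) := by
    have h1 : LinearIndependent ℤ (fun j => castQ d (b j)) :=
      hbZ.map' (castQ d) (LinearMap.ker_eq_bot.mpr (castQ_injective d))
    exact (LinearIndependent.iff_fractionRing ℤ ℚ).mp h1
  -- `1 ≤ n`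
  have hn1 : 1 ≤ n := by
    rcases Nat.eq_zero_or_pos n with h0 | h; swap
    · exact h
    exfalso
    subst h0
    have h := bL.sum_repr ⟨a 0, haL 0⟩
    rw [Finset.univ_eq_empty, Finset.sum_empty] at h
    apply (ha 0).1
    have h2 := congrArg Subtype.val h
    simpa using h2.symm
  -- `n ≤ ℓ`
  set A : Fin (ℓ + 1) → (Fin d → ℚ) := fun i => castQ d (a i) with hA
  have hAdep : ¬ LinearIndependent ℚ A := by
    intro hAind
    have hdet := gram_det_ne_zero a hAind
    set H : Matrix (Fin (ℓ + 1)) (Fin (ℓ + 1)) ℤ := Matrix.of fun i j => ∑ k, a i k * a j k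
      with hH
    have hdetR : (H.map (Int.cast : ℤ → ℝ)).det ≠ 0 := by
      have h : ((H.det : ℤ) : ℝ) = (H.map (Int.cast : ℤ → ℝ)).det := by
        simpa using (Int.castRingHom ℝ).map_det H
      intro h0
      rw [h0] at h
      exact hdet (by exact_mod_cast h)
    have hmv : (H.map (Int.cast : ℤ → ℝ)).mulVec lam = 0 := by
      funext i
      rw [Matrix.mulVec, dotProduct]
      simp only [Matrix.map_apply, hH, Matrix.of_apply, Pi.zero_apply]
      push_cast
      calc ∑ j, (∑ k, (a i k : ℝ) * (a j k : ℝ)) * lam j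
          = ∑ j, ∑ k, (a i k : ℝ) * (lam j * (a j k : ℝ)) := by
            refine Finset.sum_congr rfl fun j _ => ?_
            rw [Finset.sum_mul]
            exact Finset.sum_congr rfl fun k _ => by ring
        _ = ∑ k, (a i k : ℝ) * ∑ j, lam j * (a j k : ℝ) := by
            rw [Finset.sum_comm]
            exact Finset.sum_congr rfl fun k _ => by rw [Finset.mul_sum]
        _ = 0 := by
            refine Finset.sum_eq_zero fun k _ => ?_
            rw [hrel k, mul_zero]
    have hlamne : lam ≠ 0 := by
      intro h0
      have := hlam 0
      rw [h0] at this
      simp at this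
    exact hdetR ((Matrix.exists_mulVec_eq_zero_iff).mp ⟨lam, hlamne, hmv⟩)
  obtain ⟨g, hgsum, i0, hgi0⟩ := Fintype.not_linearIndependent_iff.mp hAdep
  set A' : Fin ℓ → (Fin d → ℚ) := fun j => A (i0.succAbove j) with hA'
  set W : Submodule ℚ (Fin d → ℚ) := Submodule.span ℚ (Set.range A') with hW
  have hspanA : ∀ i, A i ∈ W := by
    intro i
    rcases eq_or_ne i i0 with heq | hne
    · subst heq
      have hsplit := Fin.sum_univ_succAbove (fun j => g j • A j) i
      rw [hgsum] at hsplit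
      have hgne : -g i ≠ 0 := neg_ne_zero.mpr hgi0
      have h2 : ∑ j : Fin ℓ, g (i.succAbove j) • A (i.succAbove j) = (-g i) • A i := by
        have h3 := eq_neg_of_add_eq_zero_right hsplit.symm
        rw [h3, neg_smul]
      have hAi : A i = (-g i)⁻¹ • ∑ j : Fin ℓ, g (i.succAbove j) • A (i.succAbove j) := by
        rw [h2, inv_smul_smul₀ hgne]
      rw [hAi]
      refine Submodule.smul_mem _ _ (Submodule.sum_mem _ fun j _ => ?_)
      refine Submodule.smul_mem _ _ (Submodule.subset_span ⟨j, ?_⟩)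
      simp only [hA']
    · obtain ⟨j, hj⟩ := Fin.exists_succAbove_eq hne
      refine Submodule.subset_span ⟨j, ?_⟩
      simp only [hA']
      rw [hj]
  have hnle : n ≤ ℓ := by
    have hWfin : FiniteDimensional ℚ W := FiniteDimensional.span_of_finite ℚ (Set.finite_range A')
    have key : ∀ v, v ∈ Submodule.span ℤ (Set.range a) → castQ d v ∈ W := by
      intro v hv
      induction hv using Submodule.span_induction with
      | mem x hx => obtain ⟨i, rfl⟩ := hx; exact hspanA i
      | zero => rw [map_zero]; exact Submodule.zero_mem W
      | add x y hx hy hpx hpy => rw [map_add]; exact Submodule.add_mem W hpx hpy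
      | smul m x hx hpx =>
          rw [map_smul]
          exact Submodule.smul_of_tower_mem W m hpx
    have hbW : ∀ j, castQ d (b j) ∈ W := fun j => key (b j) (by rw [← hL]; exact (bL j).2)
    have hind2 : LinearIndependent ℚ (fun j => (⟨castQ d (b j), hbW j⟩ : W)) := by
      apply LinearIndependent.of_comp W.subtype
      exact hbQ
    have hcard := hind2.fintype_card_le_finrank
    have hWle : Module.finrank ℚ W ≤ ℓ := by
      have h := finrank_range_le_card (R := ℚ) A'
      simpa [Set.finrank] using h
    simpa using hcard.trans hWle
  -- the projection
  set πf : (Fin d → ℝ) → (Fin n → ℝ) := fun x j => ∑ k, (b j k : ℝ) * x k with hπ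
  have hπlin : IsLinearMap ℝ πf := by
    constructor
    · intro u v
      funext j
      simp only [hπ, Pi.add_apply, mul_add]
      rw [Finset.sum_add_distrib]
    · intro c u
      funext j
      simp only [hπ, Pi.smul_apply, smul_eq_mul, Finset.mul_sum]
      exact Finset.sum_congr rfl fun k _ => by ring
  set tS : (Fin n → ℤ) → (Fin d → ℤ) := fun c k => ∑ j, c j * b j k with htS
  have hpair_comp : ∀ (c : Fin n → ℤ) (x : Fin d → ℝ), pair c (πf x) = pair (tS c) x := by
    intro c x
    unfold pair
    simp only [hπ, htS]
    push_cast
    calc ∑ j, (c j : ℝ) * ∑ k, (b j k : ℝ) * x k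
        = ∑ j, ∑ k, ((c j : ℝ) * (b j k : ℝ)) * x k := by
          refine Finset.sum_congr rfl fun j _ => ?_
          rw [Finset.mul_sum]
          exact Finset.sum_congr rfl fun k _ => by ring
      _ = ∑ k, (∑ j, (c j : ℝ) * (b j k : ℝ)) * x k := by
          rw [Finset.sum_comm]
          exact Finset.sum_congr rfl fun k _ => by rw [Finset.sum_mul]
  have htS_ne : ∀ c : Fin n → ℤ, c ≠ 0 → tS c ≠ 0 := by
    intro c hc h0
    apply hc
    have hzero : ∑ j, c j • b j = 0 := by
      funext k
      rw [Finset.sum_apply]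
      have := congrFun h0 k
      simpa [htS, smul_eq_mul] using this
    have := Fintype.linearIndependent_iff.mp hbZ c hzero
    funext j; exact this j
  set Q : Set (Fin n → ℝ) := πf '' P with hQ
  have hQhull : Q = convexHull ℝ ((V.image πf : Finset _) : Set (Fin n → ℝ)) := by
    rw [hQ, hPeq, hπlin.image_convexHull, Finset.coe_image]
  have hQlat : IsLatticePolytope Q := by
    refine ⟨V.image πf, hVne.image _, ?_, hQhull⟩
    intro w hw j
    obtain ⟨v, hv, rfl⟩ := Finset.mem_image.mp hw
    refine exists_int_sum _ fun k => ?_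
    obtain ⟨m, hm⟩ := hVint v hv k
    exact ⟨b j k * m, by rw [hm]; push_cast; ring⟩
  -- surjectivity of the projection
  have hsurj : Function.Surjective πf := by
    set G : Matrix (Fin n) (Fin n) ℤ := Matrix.of fun i j => ∑ k, b i k * b j k with hG
    have hdet := gram_det_ne_zero b hbQ
    set Gr : Matrix (Fin n) (Fin n) ℝ := G.map (Int.cast : ℤ → ℝ) with hGr
    have hdetR : IsUnit Gr.det := by
      have h : ((G.det : ℤ) : ℝ) = (G.map (Int.cast : ℤ → ℝ)).det := by
        simpa using (Int.castRingHom ℝ).map_det G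
      rw [isUnit_iff_ne_zero]
      intro h0
      rw [hGr] at h0
      rw [h0] at h
      exact hdet (by exact_mod_cast h)
    intro z
    set w : Fin n → ℝ := Gr⁻¹.mulVec z with hw
    refine ⟨fun k => ∑ j, w j * (b j k : ℝ), ?_⟩
    funext i
    have : πf (fun k => ∑ j, w j * (b j k : ℝ)) i = Gr.mulVec w i := by
      simp only [hπ, Matrix.mulVec, dotProduct, hGr, Matrix.map_apply, hG,
        Matrix.of_apply]
      push_cast
      calc ∑ k, (b i k : ℝ) * ∑ j, w j * (b j k : ℝ)
          = ∑ k, ∑ j, ((b i k : ℝ) * (b j k : ℝ)) * w j := by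
            refine Finset.sum_congr rfl fun k _ => ?_
            rw [Finset.mul_sum]
            exact Finset.sum_congr rfl fun j _ => by ring
        _ = ∑ j, (∑ k, (b i k : ℝ) * (b j k : ℝ)) * w j := by
            rw [Finset.sum_comm]
            exact Finset.sum_congr rfl fun j _ => by rw [Finset.sum_mul]
    rw [this, hw, Matrix.mulVec_mulVec, Matrix.mul_nonsing_inv _ hdetR, Matrix.one_mulVec]
  have hQfull : IsFullDim Q := by
    unfold IsFullDim
    have h := AffineMap.span_eq_top_of_surjective
      (k := ℝ) ((hπlin.mk' πf).toAffineMap) (by exact hsurj) hfull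
    rw [hQ]
    exact h
  -- support function transfer
  have hsupp : ∀ c : Fin n → ℤ, suppFn Q c = suppFn P (tS c) := by
    intro c
    unfold suppFn
    congr 1
    rw [hQ, ← Set.image_comp]
    exact Set.image_congr fun x _ => hpair_comp c x
  -- representation of the normals
  have harep : ∀ i, ∃ c : Fin n → ℤ, a i = tS c ∧ c ≠ 0 := by
    intro i
    set c : Fin n → ℤ := fun j => bL.repr ⟨a i, haL i⟩ j with hc
    have h4 : ∑ j, c j • b j = a i := by
      have h := congrArg L.subtype (bL.sum_repr ⟨a i, haL i⟩)
      rw [map_sum] at h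
      simpa [hb, hc] using h
    have heq : a i = tS c := by
      funext k
      have h5 : (∑ j, c j • b j) k = a i k := by rw [h4]
      rw [Finset.sum_apply] at h5
      simp only [htS]
      rw [← h5]
      rfl
    refine ⟨c, heq, ?_⟩
    intro h0
    apply (ha i).1
    rw [heq, h0]
    funext k
    simp [htS]
  -- the scaling set for `Q`
  set SQ : Set ℝ := {s : ℝ | 0 < s ∧ (fineAdjoint Q s).Nonempty} with hSQ
  have hsub : S ⊆ SQ := by
    rintro s ⟨hs, x, hx⟩
    refine ⟨hs, πf x, ?_⟩
    intro c hc
    rw [hsupp c, hpair_comp c x]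
    exact hx (tS c) (htS_ne c hc)
  have hub : ∀ s ∈ SQ, s ≤ fineNumber P := by
    rintro s ⟨hs, z, hz⟩
    obtain ⟨x, hxz⟩ := hsurj z
    have hslack : ∀ i, suppFn P (a i) + s ≤ pair (a i) x := by
      intro i
      obtain ⟨c, hac, hc0⟩ := harep i
      have h := hz c hc0
      rw [← hxz, hpair_comp c x, hsupp c, ← hac] at h
      exact h
    have hsum0 : ∀ w : Fin d → ℝ, ∑ i, lam i * pair (a i) w = 0 := by
      intro w
      unfold pair
      calc ∑ i, lam i * ∑ k, (a i k : ℝ) * w k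
          = ∑ i, ∑ k, (lam i * (a i k : ℝ)) * w k := by
            refine Finset.sum_congr rfl fun i _ => ?_
            rw [Finset.mul_sum]
            exact Finset.sum_congr rfl fun k _ => by ring
        _ = ∑ k, (∑ i, lam i * (a i k : ℝ)) * w k := by
            rw [Finset.sum_comm]
            exact Finset.sum_congr rfl fun k _ => by rw [Finset.sum_mul]
        _ = 0 := Finset.sum_eq_zero fun k _ => by rw [hrel k, zero_mul]
    have hlampos : 0 < ∑ i, lam i :=
      Finset.sum_pos (fun i _ => hlam i) ⟨0, Finset.mem_univ 0⟩
    have h1 : (∑ i, lam i * suppFn P (a i)) + (∑ i, lam i) * fineNumber P = 0 := by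
      have := hsum0 y
      calc (∑ i, lam i * suppFn P (a i)) + (∑ i, lam i) * fineNumber P
          = ∑ i, lam i * (suppFn P (a i) + fineNumber P) := by
            rw [Finset.sum_mul, ← Finset.sum_add_distrib]
            exact Finset.sum_congr rfl fun i _ => by ring
        _ = ∑ i, lam i * pair (a i) y := by
            exact Finset.sum_congr rfl fun i _ => by rw [hyeq i]
        _ = 0 := hsum0 y
    have h2 : (∑ i, lam i * suppFn P (a i)) + (∑ i, lam i) * s ≤ 0 := by
      have hle : ∑ i, lam i * (suppFn P (a i) + s) ≤ ∑ i, lam i * pair (a i) x :=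
        Finset.sum_le_sum fun i _ => mul_le_mul_of_nonneg_left (hslack i) (hlam i).le
      rw [hsum0 x] at hle
      calc (∑ i, lam i * suppFn P (a i)) + (∑ i, lam i) * s
          = ∑ i, lam i * (suppFn P (a i) + s) := by
            rw [Finset.sum_mul, ← Finset.sum_add_distrib]
            exact Finset.sum_congr rfl fun i _ => by ring
        _ ≤ 0 := hle
    have h3 : (∑ i, lam i) * s ≤ (∑ i, lam i) * fineNumber P := by linarith
    exact le_of_mul_le_mul_left (by linarith [h3]) hlampos
  have hSQne : SQ.Nonempty := hSne.mono hsub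
  have hnum : fineNumber Q = fineNumber P := by
    apply le_antisymm
    · exact csSup_le hSQne hub
    · exact csSup_le_csSup ⟨fineNumber P, fun s hs => hub s hs⟩ hSne hsub
  refine ⟨n, hn1, hnle, Q, hQlat, hQfull, ?_⟩
  unfold fineCodeg
  rw [hnum]
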